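/- arXiv:1610.04496 — 2 statements merged into one kernel-verified Lean document; each statement's English description precedes it below -/
import Mathlib

section
/- (Poincaré inequality with inverse Bose–Einstein weight) For every continuously differentiable function φ : ℝ³ → ℝ such that the integrals ∫_{ℝ³} (e^{|p|} − 1)|∇φ(p)|² dp and ∫_{ℝ³} (e^{|p|} − 1)|φ(p)|² dp are finite, one has ∫_{ℝ³} (e^{|p|} − 1)|∇φ(p)|² dp ≥ (1/4) ∫_{ℝ³} (e^{|p|} − 1)|φ(p)|² dp. -/
open MeasureTheory Real

section PoincareAux

open Filter Set Topology RealInnerProductSpace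

local notation "E3" => EuclideanSpace ℝ (Fin 3)

noncomputable def ccPoin (r : ℝ) : ℝ := (Real.exp r - 1 - r) / r
noncomputable def ddPoin (r : ℝ) : ℝ :=
  ((Real.exp r - 1) * r - (Real.exp r - 1 - r) * 1) / r ^ 2
noncomputable def uuPoin (φ : E3 → ℝ) (i : Fin 3) (p : E3) : ℝ := φ p ^ 2 * ccPoin ‖p‖ * p i
noncomputable def ggPoin (φ : E3 → ℝ) (i : Fin 3) (p : E3) : ℝ :=
  2 * φ p * gradient φ p i * (ccPoin ‖p‖ * p i)
    + φ p ^ 2 * (ddPoin ‖p‖ * (p i / ‖p‖) * p i + ccPoin ‖p‖)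

lemma S1Poin (r : ℝ) : 0 ≤ Real.exp r - 1 - r := by
  have := Real.add_one_le_exp r; linarith

lemma S2Poin (r : ℝ) : Real.exp r - 1 - r ≤ r * (Real.exp r - 1) := by
  have h := Real.add_one_le_exp (-r)
  have hp := (Real.exp_pos r).le
  have key : (1 - r) * Real.exp r ≤ 1 := by
    have h2 := mul_le_mul_of_nonneg_right h hp
    rwa [← Real.exp_add, neg_add_cancel, Real.exp_zero, show (-r + 1) * Real.exp r
      = (1 - r) * Real.exp r by ring] at h2
  linarith

lemma ccPoin_nonneg {r : ℝ} (hr : 0 ≤ r) : 0 ≤ ccPoin r := div_nonneg (S1Poin r) hr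

lemma ccPoin_mul_self {r : ℝ} (hr : r ≠ 0) : ccPoin r * r = Real.exp r - 1 - r := by
  rw [ccPoin, div_mul_cancel₀ _ hr]

lemma ccPoin_mul_le {r : ℝ} (hr : 0 ≤ r) : ccPoin r * r ≤ Real.exp r - 1 := by
  rcases eq_or_lt_of_le hr with rfl | h
  · simp [ccPoin]
  · rw [ccPoin_mul_self h.ne']; linarith [h]

lemma ccPoin_le {r : ℝ} (hr : 0 ≤ r) : ccPoin r ≤ Real.exp r - 1 := by
  rcases eq_or_lt_of_le hr with rfl | h
  · simp [ccPoin]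
  · rw [ccPoin, div_le_iff₀ h]
    have := S2Poin r; linarith [mul_comm r (Real.exp r - 1)]

lemma ddPoin_nonneg {r : ℝ} (hr : 0 ≤ r) : 0 ≤ ddPoin r := by
  apply div_nonneg _ (sq_nonneg r)
  have := S2Poin r; nlinarith

lemma ddPoin_mul_le {r : ℝ} (hr : 0 ≤ r) : ddPoin r * r ≤ Real.exp r - 1 := by
  rcases eq_or_lt_of_le hr with rfl | h
  · simp [ddPoin]
  · rw [ddPoin, div_mul_eq_mul_div, div_le_iff₀ (by positivity)]
    have h1 := S1Poin r
    have h2 := Real.exp_pos r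
    nlinarith [h.le, Real.add_one_le_exp r]

lemma S3Poin {r : ℝ} (hr : 0 < r) : Real.exp r - 1 ≤ ddPoin r * r + 3 * ccPoin r := by
  have heq : ddPoin r * r + 3 * ccPoin r
      = (Real.exp r - 1) + 2 * ((Real.exp r - 1 - r) / r) := by
    rw [ddPoin, ccPoin]; field_simp; ring
  rw [heq]
  have := div_nonneg (S1Poin r) hr.le
  linarith

lemma coordPoin_abs_le (p : E3) (i : Fin 3) : |p i| ≤ ‖p‖ := by
  have h := abs_real_inner_le_norm p (EuclideanSpace.single i (1:ℝ))
  rw [EuclideanSpace.inner_single_right, EuclideanSpace.norm_single] at h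
  simpa using h

lemma L1Poin (u g : ℝ → ℝ) (hd : ∀ t, HasDerivAt u (g t) t) (hu : Integrable u)
    (hg : Integrable g) : ∫ t, g t = 0 := by
  have htop : Tendsto u atTop (𝓝 0) :=
    tendsto_zero_of_hasDerivAt_of_integrableOn_Ioi (a := 0) (fun x _ => hd x)
      hg.integrableOn hu.integrableOn
  have hbot : Tendsto u atBot (𝓝 0) :=
    tendsto_zero_of_hasDerivAt_of_integrableOn_Iic (a := 0) (fun x _ => hd x)
      hg.integrableOn hu.integrableOn
  have h1 : ∫ t in Ioi (0:ℝ), g t = 0 - u 0 :=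
    integral_Ioi_of_hasDerivAt_of_tendsto' (fun x _ => hd x) hg.integrableOn htop
  have h2 : ∫ t in Iic (0:ℝ), g t = u 0 - 0 :=
    integral_Iic_of_hasDerivAt_of_tendsto' (fun x _ => hd x) hg.integrableOn hbot
  rw [← intervalIntegral.integral_Iic_add_Ioi (b := (0:ℝ)) hg.integrableOn hg.integrableOn,
    h1, h2]
  ring

lemma L2Poin (i : Fin 3) (u f : (Fin 3 → ℝ) → ℝ) (hu : Integrable u) (hf : Integrable f)
    (hd : ∀ y : Fin 2 → ℝ, y ≠ 0 → ∀ t : ℝ,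
      HasDerivAt (fun s => u (i.insertNth s y)) (f (i.insertNth t y)) t) :
    ∫ x, f x = 0 := by
  have hmp := (MeasureTheory.volume_preserving_piFinSuccAbove (fun _ : Fin 3 => ℝ) i).symm
  have hsymm : ∀ (t : ℝ) (y : Fin 2 → ℝ),
      (MeasurableEquiv.piFinSuccAbove (fun _ : Fin 3 => ℝ) i).symm (t, y) = i.insertNth t y := by
    intro t y; rfl
  have hFf : Integrable (fun z : ℝ × (Fin 2 → ℝ) =>
      f ((MeasurableEquiv.piFinSuccAbove (fun _ : Fin 3 => ℝ) i).symm z)) :=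
    (hmp.integrable_comp_emb (MeasurableEquiv.measurableEmbedding _)).2 hf
  have hFu : Integrable (fun z : ℝ × (Fin 2 → ℝ) =>
      u ((MeasurableEquiv.piFinSuccAbove (fun _ : Fin 3 => ℝ) i).symm z)) :=
    (hmp.integrable_comp_emb (MeasurableEquiv.measurableEmbedding _)).2 hu
  rw [← hmp.integral_comp' (f := (MeasurableEquiv.piFinSuccAbove (fun _ : Fin 3 => ℝ) i).symm)]
  rw [MeasureTheory.Measure.volume_eq_prod] at hFf hFu ⊢
  rw [integral_prod_symm _ hFf]
  have hy0 : ∀ᵐ y : Fin 2 → ℝ, y ≠ (0 : Fin 2 → ℝ) := by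
    rw [ae_iff]
    simpa using measure_singleton (0 : Fin 2 → ℝ)
  have : ∀ᵐ y : Fin 2 → ℝ, (∫ t : ℝ,
      f ((MeasurableEquiv.piFinSuccAbove (fun _ : Fin 3 => ℝ) i).symm (t, y))) = 0 := by
    filter_upwards [hFf.prod_left_ae, hFu.prod_left_ae, hy0] with y h1 h2 h3
    refine L1Poin (fun t => u (i.insertNth t y)) _ ?_ ?_ ?_
    · intro t; simpa [hsymm] using hd y h3 t
    · simpa [hsymm] using h2
    · simpa [hsymm] using h1
  rw [integral_congr_ae this, integral_zero]

lemma linePoin_hasDerivAt (φ : E3 → ℝ) (hφ : ContDiff ℝ 1 φ) (i : Fin 3) (y : Fin 2 → ℝ)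
    (hy : y ≠ 0) (t : ℝ) :
    HasDerivAt (fun s : ℝ => uuPoin φ i ((WithLp.equiv 2 (Fin 3 → ℝ)).symm (i.insertNth s y)))
      (ggPoin φ i ((WithLp.equiv 2 (Fin 3 → ℝ)).symm (i.insertNth t y))) t := by
  set κ := (WithLp.equiv 2 (Fin 3 → ℝ)).symm with hκ
  set q : ℝ → E3 := fun s => κ (i.insertNth s y) with hqdef
  set v : E3 := EuclideanSpace.single i 1 with hv
  have happly : ∀ s, (q s) i = s := fun s => Fin.insertNth_apply_same (α := fun _ => ℝ) i s y
  have hq0 : ∀ s, q s ≠ 0 := by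
    intro s hs
    apply hy
    funext k
    have : (q s) (i.succAbove k) = 0 := by rw [hs]; rfl
    rwa [show (q s) (i.succAbove k) = y k from
      Fin.insertNth_apply_succAbove (α := fun _ => ℝ) i s y k] at this
  have hq : HasDerivAt q v t := by
    have hfun : ∀ s, q s = q 0 + s • v := by
      intro s
      ext j
      simp only [PiLp.add_apply, PiLp.smul_apply, smul_eq_mul]
      rcases eq_or_ne j i with rfl | hj
      · rw [show (q s) j = s from happly s, show (q 0) j = 0 from happly 0,
          hv, EuclideanSpace.single_apply, if_pos rfl]
        ring
      · obtain ⟨k, rfl⟩ := Fin.exists_succAbove_eq hj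
        rw [show (q s) (i.succAbove k) = y k from
            Fin.insertNth_apply_succAbove (α := fun _ => ℝ) i s y k,
          show (q 0) (i.succAbove k) = y k from
            Fin.insertNth_apply_succAbove (α := fun _ => ℝ) i 0 y k,
          hv, EuclideanSpace.single_apply, if_neg (Fin.succAbove_ne i k)]
        ring
    have H : HasDerivAt (fun s : ℝ => q 0 + s • v) ((1:ℝ) • v) t :=
      ((hasDerivAt_id t).smul_const v).const_add (q 0)
    rw [one_smul] at H
    exact H.congr_of_eventuallyEq (Eventually.of_forall fun s => (hfun s))
  have hnorm : HasDerivAt (fun s => ‖q s‖) (t / ‖q t‖) t := by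
    have hInner : HasDerivAt (fun s => ⟪q s, q s⟫) (⟪q t, v⟫ + ⟪v, q t⟫) t := hq.inner ℝ hq
    have hpos : (0:ℝ) < ⟪q t, q t⟫ := by
      rw [real_inner_self_eq_norm_mul_norm]
      have := norm_pos_iff.2 (hq0 t)
      positivity
    have hsq := (Real.hasDerivAt_sqrt hpos.ne').comp t hInner
    simp only [Function.comp_def] at hsq
    have hfun : (fun s => Real.sqrt ⟪q s, q s⟫) = fun s => ‖q s‖ := by
      funext s; rw [real_inner_self_eq_norm_mul_norm, Real.sqrt_mul_self (norm_nonneg _)]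
    rw [hfun] at hsq
    refine hsq.congr_deriv ?_
    have h1 : ⟪v, q t⟫ = t := by
      rw [real_inner_comm, hv, EuclideanSpace.inner_single_right]
      simpa using happly t
    have h2 : ⟪q t, v⟫ = t := by
      rw [hv, EuclideanSpace.inner_single_right]; simpa using happly t
    have h3 : Real.sqrt ⟪q t, q t⟫ = ‖q t‖ := by
      rw [real_inner_self_eq_norm_mul_norm, Real.sqrt_mul_self (norm_nonneg _)]
    rw [h1, h2, h3]
    have : ‖q t‖ ≠ 0 := norm_ne_zero_iff.2 (hq0 t)
    field_simp
    ring
  have hB : HasDerivAt (fun s => ccPoin ‖q s‖) (ddPoin ‖q t‖ * (t / ‖q t‖)) t := by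
    have hr0 : ‖q t‖ ≠ 0 := norm_ne_zero_iff.2 (hq0 t)
    have hc : HasDerivAt ccPoin (ddPoin ‖q t‖) ‖q t‖ := by
      have hnum := (((Real.hasDerivAt_exp ‖q t‖).sub_const 1).sub (hasDerivAt_id ‖q t‖))
      have H := hnum.div (hasDerivAt_id ‖q t‖) hr0
      simp only [id_eq] at H
      unfold ccPoin ddPoin
      exact H
    exact hc.comp t hnorm
  have hA : HasDerivAt (fun s => φ (q s)) (gradient φ (q t) i) t := by
    have H := ((hφ.differentiable one_ne_zero (q t)).hasFDerivAt).comp_hasDerivAt t hq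
    have hval : fderiv ℝ φ (q t) v = gradient φ (q t) i := by
      have : fderiv ℝ φ (q t) v = ⟪gradient φ (q t), v⟫ := by
        unfold gradient; rw [InnerProductSpace.toDual_symm_apply]
      rw [this, hv, EuclideanSpace.inner_single_right]; simp
    rwa [hval] at H
  have hP := ((hA.pow 2).mul hB).mul (hasDerivAt_id t)
  simp only [id_eq, Pi.mul_def, Pi.pow_def] at hP
  have hfun : (fun s => φ (q s) ^ 2 * ccPoin ‖q s‖ * s) = fun s => uuPoin φ i (q s) := by
    funext s
    rw [uuPoin, happly s]
  rw [hfun] at hP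
  show HasDerivAt (fun s => uuPoin φ i (q s)) (ggPoin φ i (q t)) t
  refine hP.congr_deriv ?_
  rw [ggPoin, happly t]
  push_cast
  ring

set_option maxHeartbeats 2000000 in
/-- **Poincaré inequality with inverse Bose–Einstein weight.**
For every C¹ function `φ : ℝ³ → ℝ` such that the weighted integrals of `|∇φ|²`
and `|φ|²` against the weight `e^{|p|} - 1` are finite, one has
`∫ (e^{|p|}-1)|∇φ|² ≥ (1/4) ∫ (e^{|p|}-1)|φ|²`. -/
theorem poincare_inverse_BoseEinstein_weight
    (φ : EuclideanSpace ℝ (Fin 3) → ℝ) (hφ : ContDiff ℝ 1 φ)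
    (h1 : Integrable (fun p : EuclideanSpace ℝ (Fin 3) =>
      (Real.exp ‖p‖ - 1) * ‖gradient φ p‖ ^ 2))
    (h2 : Integrable (fun p : EuclideanSpace ℝ (Fin 3) =>
      (Real.exp ‖p‖ - 1) * (φ p) ^ 2)) :
    (∫ p : EuclideanSpace ℝ (Fin 3), (Real.exp ‖p‖ - 1) * ‖gradient φ p‖ ^ 2) ≥
      (1 / 4) * ∫ p : EuclideanSpace ℝ (Fin 3), (Real.exp ‖p‖ - 1) * (φ p) ^ 2 := by
  have hφc := hφ.continuous
  have hGc : Continuous (fun p : EuclideanSpace ℝ (Fin 3) => gradient φ p) := by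
    unfold gradient
    exact (LinearIsometryEquiv.continuous _).comp (hφ.continuous_fderiv one_ne_zero)
  have hcoord : ∀ j : Fin 3, Continuous (fun p : EuclideanSpace ℝ (Fin 3) => p j) := fun j =>
    (continuous_apply j).comp (PiLp.continuous_ofLp (p := 2) (β := fun _ : Fin 3 => ℝ))
  have hccm : Measurable ccPoin := by
    unfold ccPoin
    exact ((Real.continuous_exp.measurable.sub measurable_const).sub measurable_id).div
      measurable_id
  have hddm : Measurable ddPoin := by
    unfold ddPoin
    exact (((Real.continuous_exp.measurable.sub measurable_const).mul measurable_id).sub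
      (((Real.continuous_exp.measurable.sub measurable_const).sub measurable_id).mul
        measurable_const)).div (measurable_id.pow_const 2)
  have hnm : Measurable (fun p : EuclideanSpace ℝ (Fin 3) => ‖p‖) := continuous_norm.measurable
  have hUm : ∀ i, AEStronglyMeasurable (uuPoin φ i) volume := by
    intro i
    exact (((hφc.measurable.pow_const 2).mul (hccm.comp hnm)).mul
      (hcoord i).measurable).aestronglyMeasurable
  have hGim : ∀ i, Measurable (fun p : EuclideanSpace ℝ (Fin 3) => gradient φ p i) := fun i =>
    ((hcoord i).comp hGc).measurable
  have hGGm : ∀ i, AEStronglyMeasurable (ggPoin φ i) volume := by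
    intro i
    apply Measurable.aestronglyMeasurable
    unfold ggPoin
    exact (((measurable_const.mul hφc.measurable).mul (hGim i)).mul
        ((hccm.comp hnm).mul (hcoord i).measurable)).add
      ((hφc.measurable.pow_const 2).mul
        ((((hddm.comp hnm).mul ((hcoord i).measurable.div hnm)).mul
          (hcoord i).measurable).add (hccm.comp hnm)))
  have hUb : ∀ (i : Fin 3) (p : EuclideanSpace ℝ (Fin 3)),
      |uuPoin φ i p| ≤ (Real.exp ‖p‖ - 1) * φ p ^ 2 := by
    intro i p
    have hcc0 := ccPoin_nonneg (norm_nonneg p)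
    have h1' : |ccPoin ‖p‖ * p i| ≤ Real.exp ‖p‖ - 1 := by
      rw [abs_mul, abs_of_nonneg hcc0]
      calc ccPoin ‖p‖ * |p i| ≤ ccPoin ‖p‖ * ‖p‖ :=
            mul_le_mul_of_nonneg_left (coordPoin_abs_le p i) hcc0
        _ ≤ _ := ccPoin_mul_le (norm_nonneg p)
    calc |uuPoin φ i p| = φ p ^ 2 * |ccPoin ‖p‖ * p i| := by
          rw [uuPoin, mul_assoc, abs_mul, abs_of_nonneg (sq_nonneg (φ p))]
      _ ≤ φ p ^ 2 * (Real.exp ‖p‖ - 1) := mul_le_mul_of_nonneg_left h1' (sq_nonneg _)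
      _ = _ := mul_comm _ _
  have hGb : ∀ (i : Fin 3) (p : EuclideanSpace ℝ (Fin 3)),
      |ggPoin φ i p| ≤ (Real.exp ‖p‖ - 1) * ‖gradient φ p‖ ^ 2
        + 3 * ((Real.exp ‖p‖ - 1) * φ p ^ 2) := by
    intro i p
    rcases eq_or_ne ‖p‖ 0 with hr0 | hr0
    · have hp0 : p = 0 := norm_eq_zero.1 hr0
      subst hp0
      have hz : ((0 : EuclideanSpace ℝ (Fin 3)) i : ℝ) = 0 := rfl
      simp [ggPoin, ccPoin, ddPoin, hz]
    · have hr : 0 < ‖p‖ := lt_of_le_of_ne (norm_nonneg p) (Ne.symm hr0)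
      have hw : 0 ≤ Real.exp ‖p‖ - 1 := by linarith [S1Poin ‖p‖, hr.le]
      have hcc0 := ccPoin_nonneg hr.le
      have hdd0 := ddPoin_nonneg hr.le
      have hpi := coordPoin_abs_le p i
      have hgi := coordPoin_abs_le (gradient φ p) i
      have hm : (0:ℝ) ≤ ‖gradient φ p‖ := norm_nonneg _
      have hccpi : |ccPoin ‖p‖ * p i| ≤ Real.exp ‖p‖ - 1 := by
        rw [abs_mul, abs_of_nonneg hcc0]
        calc ccPoin ‖p‖ * |p i| ≤ ccPoin ‖p‖ * ‖p‖ := mul_le_mul_of_nonneg_left hpi hcc0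
          _ ≤ _ := ccPoin_mul_le hr.le
      have hterm1 : |2 * φ p * gradient φ p i * (ccPoin ‖p‖ * p i)|
          ≤ 2 * |φ p| * ‖gradient φ p‖ * (Real.exp ‖p‖ - 1) := by
        rw [abs_mul]
        apply mul_le_mul _ hccpi (abs_nonneg _) (by positivity)
        rw [abs_mul, abs_mul, abs_two]
        exact mul_le_mul_of_nonneg_left hgi (by positivity)
      have hdd1 : |ddPoin ‖p‖ * (p i / ‖p‖) * p i| ≤ Real.exp ‖p‖ - 1 := by
        have hsq' : p i * p i ≤ ‖p‖ * ‖p‖ := by nlinarith [hpi, abs_nonneg (p i), sq_abs (p i)]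
        have heq : |ddPoin ‖p‖ * (p i / ‖p‖) * p i| = ddPoin ‖p‖ * ((p i * p i) / ‖p‖) := by
          rw [abs_mul, abs_mul, abs_div, abs_of_nonneg hdd0, abs_of_nonneg hr.le,
            ← abs_mul_abs_self (p i)]
          ring
        rw [heq]
        calc ddPoin ‖p‖ * (p i * p i / ‖p‖) ≤ ddPoin ‖p‖ * ‖p‖ := by
              apply mul_le_mul_of_nonneg_left _ hdd0
              rw [div_le_iff₀ hr]
              nlinarith [hsq']
          _ ≤ _ := ddPoin_mul_le hr.le
      have hterm2 : |φ p ^ 2 * (ddPoin ‖p‖ * (p i / ‖p‖) * p i + ccPoin ‖p‖)|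
          ≤ φ p ^ 2 * (2 * (Real.exp ‖p‖ - 1)) := by
        rw [abs_mul, abs_of_nonneg (sq_nonneg (φ p))]
        apply mul_le_mul_of_nonneg_left _ (sq_nonneg _)
        calc |ddPoin ‖p‖ * (p i / ‖p‖) * p i + ccPoin ‖p‖|
            ≤ |ddPoin ‖p‖ * (p i / ‖p‖) * p i| + |ccPoin ‖p‖| := abs_add_le _ _
          _ ≤ (Real.exp ‖p‖ - 1) + (Real.exp ‖p‖ - 1) := by
              refine add_le_add hdd1 ?_
              rw [abs_of_nonneg hcc0]; exact ccPoin_le hr.le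
          _ = 2 * (Real.exp ‖p‖ - 1) := by ring
      calc |ggPoin φ i p| ≤ |2 * φ p * gradient φ p i * (ccPoin ‖p‖ * p i)|
            + |φ p ^ 2 * (ddPoin ‖p‖ * (p i / ‖p‖) * p i + ccPoin ‖p‖)| := abs_add_le _ _
        _ ≤ 2 * |φ p| * ‖gradient φ p‖ * (Real.exp ‖p‖ - 1)
            + φ p ^ 2 * (2 * (Real.exp ‖p‖ - 1)) := add_le_add hterm1 hterm2
        _ ≤ (Real.exp ‖p‖ - 1) * ‖gradient φ p‖ ^ 2 + 3 * ((Real.exp ‖p‖ - 1) * φ p ^ 2) := by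
            nlinarith [mul_nonneg hw (sq_nonneg (|φ p| - ‖gradient φ p‖)), sq_abs (φ p)]
  have hUint : ∀ i, Integrable (uuPoin φ i) := by
    intro i
    exact h2.mono' (hUm i) (Eventually.of_forall fun p => by
      rw [Real.norm_eq_abs]; exact hUb i p)
  have hdom : Integrable (fun p : EuclideanSpace ℝ (Fin 3) =>
      (Real.exp ‖p‖ - 1) * ‖gradient φ p‖ ^ 2 + 3 * ((Real.exp ‖p‖ - 1) * φ p ^ 2)) :=
    h1.add (h2.const_mul 3)
  have hGint : ∀ i, Integrable (ggPoin φ i) := by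
    intro i
    exact hdom.mono' (hGGm i) (Eventually.of_forall fun p => by
      rw [Real.norm_eq_abs]; exact hGb i p)
  have hzero : ∀ i, ∫ p, ggPoin φ i p = 0 := by
    intro i
    have hmp := EuclideanSpace.volume_preserving_symm_measurableEquiv_toLp (Fin 3)
    have hmps := MeasurePreserving.symm (MeasurableEquiv.toLp 2 (Fin 3 → ℝ)).symm hmp
    have hiu : Integrable (fun x : Fin 3 → ℝ =>
        uuPoin φ i ((WithLp.equiv 2 (Fin 3 → ℝ)).symm x)) :=
      (hmps.integrable_comp_emb (MeasurableEquiv.measurableEmbedding _)).2 (hUint i)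
    have hig : Integrable (fun x : Fin 3 → ℝ =>
        ggPoin φ i ((WithLp.equiv 2 (Fin 3 → ℝ)).symm x)) :=
      (hmps.integrable_comp_emb (MeasurableEquiv.measurableEmbedding _)).2 (hGint i)
    have hL2 := L2Poin i _ _ hiu hig (fun y hy t => linePoin_hasDerivAt φ hφ i y hy t)
    calc ∫ p, ggPoin φ i p
        = ∫ x : Fin 3 → ℝ, ggPoin φ i ((MeasurableEquiv.toLp 2 (Fin 3 → ℝ)).symm.symm x) :=
          (hmps.integral_comp' _).symm
      _ = 0 := hL2
  have hSint : Integrable (fun p : EuclideanSpace ℝ (Fin 3) => ∑ i : Fin 3, ggPoin φ i p) :=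
    integrable_finset_sum _ (fun i _ => hGint i)
  have hSzero : ∫ p, (∑ i : Fin 3, ggPoin φ i p) = 0 := by
    rw [integral_finset_sum _ (fun i _ => hGint i)]
    simp [hzero]
  have hae : ∀ᵐ p : EuclideanSpace ℝ (Fin 3), p ≠ 0 := by
    rw [ae_iff]
    simpa using measure_singleton (0 : EuclideanSpace ℝ (Fin 3))
  have key : ∀ᵐ p : EuclideanSpace ℝ (Fin 3),
      (Real.exp ‖p‖ - 1) * φ p ^ 2 ≤ (∑ i : Fin 3, ggPoin φ i p)
        + ((1/2) * ((Real.exp ‖p‖ - 1) * φ p ^ 2)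
          + 2 * ((Real.exp ‖p‖ - 1) * ‖gradient φ p‖ ^ 2)) := by
    filter_upwards [hae] with p hp
    have hr : 0 < ‖p‖ := norm_pos_iff.2 hp
    have hsq : p 0 * p 0 + p 1 * p 1 + p 2 * p 2 = ‖p‖ ^ 2 := by
      have h : ⟪p, p⟫ = ‖p‖ ^ 2 := real_inner_self_eq_norm_sq p
      rw [← h]; simp only [PiLp.inner_apply, Fin.sum_univ_three, RCLike.inner_apply, conj_trivial]
    have hinner : ⟪gradient φ p, p⟫ = gradient φ p 0 * p 0 + gradient φ p 1 * p 1
        + gradient φ p 2 * p 2 := by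
      simp only [PiLp.inner_apply, Fin.sum_univ_three, RCLike.inner_apply, conj_trivial]
      ring
    have hsum : ∑ i : Fin 3, ggPoin φ i p
        = 2 * φ p * ccPoin ‖p‖ * ⟪gradient φ p, p⟫
          + φ p ^ 2 * (ddPoin ‖p‖ * ‖p‖ + 3 * ccPoin ‖p‖) := by
      have e : ∀ i : Fin 3, ggPoin φ i p
          = 2 * φ p * ccPoin ‖p‖ * (gradient φ p i * p i)
            + φ p ^ 2 * ((ddPoin ‖p‖ / ‖p‖) * (p i * p i)) + φ p ^ 2 * ccPoin ‖p‖ := by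
        intro i
        rw [ggPoin]
        field_simp
        ring
      rw [Fin.sum_univ_three, e 0, e 1, e 2, hinner]
      have : (ddPoin ‖p‖ / ‖p‖) * (‖p‖ ^ 2) = ddPoin ‖p‖ * ‖p‖ := by
        field_simp
      linear_combination (φ p ^ 2 * (ddPoin ‖p‖ / ‖p‖)) * hsq + φ p ^ 2 * this
    have hCS : |⟪gradient φ p, p⟫| ≤ ‖gradient φ p‖ * ‖p‖ := abs_real_inner_le_norm _ _
    have hdiv := S3Poin hr
    have hcc0 := ccPoin_nonneg hr.le
    have hw : 0 ≤ Real.exp ‖p‖ - 1 := by linarith [S1Poin ‖p‖, hr.le]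
    have h1' : φ p ^ 2 * (ddPoin ‖p‖ * ‖p‖ + 3 * ccPoin ‖p‖)
        ≥ φ p ^ 2 * (Real.exp ‖p‖ - 1) := mul_le_mul_of_nonneg_left hdiv (sq_nonneg _)
    have habs : |2 * φ p * ccPoin ‖p‖ * ⟪gradient φ p, p⟫|
        ≤ 2 * |φ p| * ‖gradient φ p‖ * (Real.exp ‖p‖ - 1) := by
      rw [abs_mul, abs_mul, abs_mul, abs_two, abs_of_nonneg hcc0]
      calc 2 * |φ p| * ccPoin ‖p‖ * |⟪gradient φ p, p⟫|
          ≤ 2 * |φ p| * ccPoin ‖p‖ * (‖gradient φ p‖ * ‖p‖) :=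
            mul_le_mul_of_nonneg_left hCS (by positivity)
        _ = 2 * |φ p| * ‖gradient φ p‖ * (ccPoin ‖p‖ * ‖p‖) := by ring
        _ ≤ 2 * |φ p| * ‖gradient φ p‖ * (Real.exp ‖p‖ - 1) :=
            mul_le_mul_of_nonneg_left (ccPoin_mul_le hr.le) (by positivity)
    have t1 : 2 * φ p * ccPoin ‖p‖ * ⟪gradient φ p, p⟫
        ≥ -(2 * |φ p| * ‖gradient φ p‖ * (Real.exp ‖p‖ - 1)) := by
      have := neg_abs_le (2 * φ p * ccPoin ‖p‖ * ⟪gradient φ p, p⟫)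
      linarith
    have t3 : 2 * |φ p| * ‖gradient φ p‖ * (Real.exp ‖p‖ - 1)
        ≤ (1/2) * ((Real.exp ‖p‖ - 1) * φ p ^ 2)
          + 2 * ((Real.exp ‖p‖ - 1) * ‖gradient φ p‖ ^ 2) := by
      nlinarith [mul_nonneg hw (sq_nonneg (|φ p| - 2 * ‖gradient φ p‖)), sq_abs (φ p)]
    rw [hsum]
    linarith [h1', t1, t3]
  have hR : Integrable (fun p : EuclideanSpace ℝ (Fin 3) =>
      (∑ i : Fin 3, ggPoin φ i p) + ((1/2) * ((Real.exp ‖p‖ - 1) * φ p ^ 2)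
        + 2 * ((Real.exp ‖p‖ - 1) * ‖gradient φ p‖ ^ 2))) :=
    hSint.add ((h2.const_mul (1/2)).add (h1.const_mul 2))
  have hc : Integrable (fun p : EuclideanSpace ℝ (Fin 3) =>
      (1/2) * ((Real.exp ‖p‖ - 1) * φ p ^ 2)
        + 2 * ((Real.exp ‖p‖ - 1) * ‖gradient φ p‖ ^ 2)) :=
    (h2.const_mul (1/2)).add (h1.const_mul 2)
  have hmono := integral_mono_ae h2 hR key
  rw [integral_add hSint hc, hSzero,
    integral_add (h2.const_mul (1/2)) (h1.const_mul 2), integral_const_mul,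
    integral_const_mul] at hmono
  linarith

end PoincareAux
end

section
/- Let Ψ : ℝ³ → ℂ be measurable with |Ψ|² − 1 ∈ L¹(ℝ³), and define N_c(r) = C* ∫_{ℝ³} |Ψ(r′)|² e^{−|r−r′|} dr′, where C* = ( ∫_{ℝ³} e^{−|r′|} dr′ )^{-1} = 1/(8π). Then N_c is differentiable, its gradient satisfies ∇_r N_c(r) = −C* ∫_{ℝ³} ((r−r′)/|r−r′|) ( |Ψ(r′)|² − 1 ) e^{−|r−r′|} dr′ (using that ∫_{ℝ³} ((r−r′)/|r−r′|) e^{−|r−r′|} dr′ = 0), and consequently ‖∇_r N_c‖_{L^∞(ℝ³)} ≤ C* ‖ |Ψ|² − 1 ‖_{L¹(ℝ³)}. -/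
open MeasureTheory Real

noncomputable section

/-- Euclidean three-dimensional space. -/
abbrev E3 : Type := EuclideanSpace ℝ (Fin 3)

/-- The locally averaged condensate density
`N_c(r) = C* ∫ |Ψ(r′)|² e^{−|r−r′|} dr′` with `C* = 1/(8π)`. -/
def Ncond (Ψ : E3 → ℂ) (r : E3) : ℝ :=
  (1 / (8 * Real.pi)) * ∫ r' : E3, ‖Ψ r'‖ ^ 2 * Real.exp (-‖r - r'‖)


-- exp(-t) 1-Lipschitz on nonneg reals
lemma exp_neg_lip {a b : ℝ} (ha : 0 ≤ a) (hb : 0 ≤ b) :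
    |Real.exp (-a) - Real.exp (-b)| ≤ |a - b| := by
  wlog hab : a ≤ b generalizing a b with H
  · rw [abs_sub_comm, abs_sub_comm a b]
    exact H hb ha (le_of_not_ge hab)
  have h1 : Real.exp (-b) ≤ Real.exp (-a) := Real.exp_le_exp.2 (by linarith)
  have h2 : Real.exp (-a) ≤ 1 := Real.exp_le_one_iff.2 (by linarith)
  have h3 : (a - b) + 1 ≤ Real.exp (a - b) := Real.add_one_le_exp _
  have h4 : Real.exp (-a) * Real.exp (a - b) = Real.exp (-b) := by
    rw [← Real.exp_add]; ring_nf
  have h5 : 0 < Real.exp (-a) := Real.exp_pos _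
  rw [abs_of_nonneg (by linarith), abs_of_nonpos (by linarith)]
  nlinarith

-- Lipschitz of x ↦ exp(-‖x - a‖)
lemma lip_exp_norm (a : E3) : LipschitzWith 1 (fun x : E3 => Real.exp (-‖x - a‖)) := by
  refine LipschitzWith.of_dist_le_mul fun x y => ?_
  rw [Real.dist_eq, NNReal.coe_one, one_mul, dist_eq_norm]
  calc |Real.exp (-‖x - a‖) - Real.exp (-‖y - a‖)| ≤ |‖x - a‖ - ‖y - a‖| :=
        exp_neg_lip (norm_nonneg _) (norm_nonneg _)
    _ ≤ ‖(x - a) - (y - a)‖ := abs_norm_sub_norm_le _ _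
    _ = ‖x - y‖ := by rw [sub_sub_sub_cancel_right]

-- integrability of exp(-‖x‖)
lemma integrable_exp_neg_norm : Integrable (fun a : E3 => Real.exp (-‖a‖)) := by
  have h4 : ((Module.finrank ℝ E3 : ℝ)) < 4 := by
    simp [finrank_euclideanSpace_fin]; norm_num
  have hI := (integrable_one_add_norm (E := E3) (μ := volume) h4).const_mul 256
  refine hI.mono' ?_ (Filter.Eventually.of_forall fun a => ?_)
  · exact (Continuous.aestronglyMeasurable (by continuity))
  · have ht : (0:ℝ) ≤ ‖a‖ := norm_nonneg _
    set t := ‖a‖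
    have h1 : 1 + t ≤ 4 * Real.exp (t/4) := by nlinarith [Real.add_one_le_exp (t/4)]
    have key0 : (1+t)^4 ≤ 256 * Real.exp t := by
      calc (1+t)^4 ≤ (4 * Real.exp (t/4))^4 := by
            apply pow_le_pow_left₀ (by positivity) h1
        _ = 256 * (Real.exp (t/4))^4 := by ring
        _ = 256 * Real.exp t := by
            rw [← Real.exp_nat_mul]; congr 1; push_cast; ring
    have hp : (0:ℝ) < (1+t)^4 := by positivity
    have he : (0:ℝ) < Real.exp t := Real.exp_pos _
    rw [Real.norm_eq_abs, abs_of_nonneg (Real.exp_pos _).le]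
    have hrw : (1 + t) ^ (-(4:ℝ)) = ((1+t)^4)⁻¹ := by
      rw [Real.rpow_neg (by positivity)]
      norm_num
    rw [hrw, Real.exp_neg]
    have hinv : ((1+t)^4)⁻¹ * (1+t)^4 = 1 := inv_mul_cancel₀ hp.ne'
    have h6 := mul_le_mul_of_nonneg_left key0 (inv_pos.2 hp).le
    rw [inv_le_iff_one_le_mul₀ he]
    nlinarith

lemma hasFDerivAt_norm_sub (a x : E3) (hxa : x ≠ a) :
    HasFDerivAt (fun y : E3 => ‖y - a‖) (‖x - a‖⁻¹ • innerSL ℝ (x - a)) x := by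
  have hne : x - a ≠ 0 := sub_ne_zero.2 hxa
  have hn : (0:ℝ) < ‖x - a‖ := norm_pos_iff.2 hne
  have hsub : HasFDerivAt (fun y : E3 => y - a) (ContinuousLinearMap.id ℝ E3) x :=
    (hasFDerivAt_id x).sub_const a
  have hnsq : HasFDerivAt (fun y : E3 => ‖y - a‖ ^ 2)
      (2 • (innerSL ℝ (x - a)).comp (ContinuousLinearMap.id ℝ E3)) x := hsub.norm_sq
  have hsq_ne : ‖x - a‖ ^ 2 ≠ 0 := by positivity
  have hsqrt := (Real.hasDerivAt_sqrt hsq_ne).comp_hasFDerivAt x hnsq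
  have hfun : (fun y : E3 => Real.sqrt (‖y - a‖ ^ 2)) = fun y : E3 => ‖y - a‖ := by
    funext y; rw [Real.sqrt_sq (norm_nonneg _)]
  rw [Function.comp_def, hfun] at hsqrt
  refine hsqrt.congr_fderiv (Eq.symm ?_)
  rw [Real.sqrt_sq (norm_nonneg _)]
  ext y
  simp only [ContinuousLinearMap.smul_apply, ContinuousLinearMap.comp_apply,
    ContinuousLinearMap.coe_smul', Pi.smul_apply, ContinuousLinearMap.coe_id', id_eq,
    smul_eq_mul, ContinuousLinearMap.smul_apply]
  simp only [nsmul_eq_mul, smul_eq_mul]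
  field_simp
  ring

lemma hasFDerivAt_exp_neg_norm_sub (a x : E3) (hxa : x ≠ a) :
    HasFDerivAt (fun y : E3 => Real.exp (-‖y - a‖))
      (Real.exp (-‖x - a‖) • (-(‖x - a‖⁻¹ • innerSL ℝ (x - a)))) x :=
  ((hasFDerivAt_norm_sub a x hxa).neg).exp

lemma unit_norm_le_one (y : E3) : ‖‖y‖⁻¹ • y‖ ≤ 1 := by
  rcases eq_or_ne y 0 with h | h
  · simp [h]
  · rw [norm_smul, Real.norm_eq_abs, abs_of_nonneg (inv_nonneg.2 (norm_nonneg _)),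
      inv_mul_cancel₀ (norm_ne_zero_iff.2 h)]

lemma vec_norm_le (Ψ : E3 → ℂ) (x a : E3) :
    ‖((‖Ψ a‖ ^ 2 - 1) * Real.exp (-‖x - a‖)) • (‖x - a‖⁻¹ • (x - a))‖
      ≤ |‖Ψ a‖ ^ 2 - 1| := by
  rw [norm_smul, norm_mul, Real.norm_eq_abs, Real.norm_eq_abs,
    abs_of_nonneg (Real.exp_pos _).le]
  have h1 := unit_norm_le_one (x - a)
  have h2 : Real.exp (-‖x - a‖) ≤ 1 := Real.exp_le_one_iff.2 (neg_nonpos.2 (norm_nonneg _))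
  have h3 : (0:ℝ) ≤ Real.exp (-‖x - a‖) := (Real.exp_pos _).le
  have h4 : (0:ℝ) ≤ |‖Ψ a‖ ^ 2 - 1| := abs_nonneg _
  have h5 : (0:ℝ) ≤ ‖‖x - a‖⁻¹ • (x - a)‖ := norm_nonneg _
  calc |‖Ψ a‖ ^ 2 - 1| * Real.exp (-‖x - a‖) * ‖‖x - a‖⁻¹ • (x - a)‖
      = |‖Ψ a‖ ^ 2 - 1| * (Real.exp (-‖x - a‖) * ‖‖x - a‖⁻¹ • (x - a)‖) := by ring
    _ ≤ |‖Ψ a‖ ^ 2 - 1| * 1 := by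
        refine mul_le_mul_of_nonneg_left ?_ h4
        nlinarith
    _ = |‖Ψ a‖ ^ 2 - 1| := mul_one _

lemma vec_integrable (Ψ : E3 → ℂ) (hmeas : Measurable Ψ)
    (hL1 : Integrable (fun r' : E3 => ‖Ψ r'‖ ^ 2 - 1)) (x : E3) :
    Integrable (fun a : E3 =>
      ((‖Ψ a‖ ^ 2 - 1) * Real.exp (-‖x - a‖)) • (‖x - a‖⁻¹ • (x - a))) := by
  have hfm : Measurable (fun a : E3 => ‖Ψ a‖ ^ 2 - 1) :=
    (hmeas.norm.pow_const 2).sub measurable_const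
  have cexp : Continuous (fun a : E3 => Real.exp (-‖x - a‖)) :=
    Real.continuous_exp.comp ((continuous_const.sub continuous_id).norm.neg)
  refine hL1.abs.mono' ?_ (Filter.Eventually.of_forall fun a => vec_norm_le Ψ x a)
  exact AEStronglyMeasurable.smul
    (hfm.aestronglyMeasurable.mul cexp.aestronglyMeasurable)
    (AEStronglyMeasurable.smul
      ((measurable_const.sub measurable_id).norm.inv).aestronglyMeasurable
      (continuous_const.sub continuous_id).aestronglyMeasurable)

lemma key_hasGradientAt (Ψ : E3 → ℂ) (hmeas : Measurable Ψ)
    (hL1 : Integrable (fun r' : E3 => ‖Ψ r'‖ ^ 2 - 1)) (x₀ : E3) :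
    HasGradientAt (Ncond Ψ)
      (-((1 / (8 * Real.pi)) •
        ∫ r' : E3, ((‖Ψ r'‖ ^ 2 - 1) * Real.exp (-‖x₀ - r'‖)) •
          (‖x₀ - r'‖⁻¹ • (x₀ - r')))) x₀ := by
  have hfm : Measurable (fun a : E3 => ‖Ψ a‖ ^ 2 - 1) :=
    (hmeas.norm.pow_const 2).sub measurable_const
  have cexp : ∀ x : E3, Continuous (fun a : E3 => Real.exp (-‖x - a‖)) := fun x =>
    Real.continuous_exp.comp ((continuous_const.sub continuous_id).norm.neg)
  have hint_e : ∀ x : E3, Integrable (fun a : E3 => Real.exp (-‖x - a‖)) := fun x => by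
    have := (integrable_comp_sub_left (fun a : E3 => Real.exp (-‖a‖)) x).2
      integrable_exp_neg_norm
    simpa using this
  have hint_F : ∀ x : E3,
      Integrable (fun a : E3 => (‖Ψ a‖ ^ 2 - 1) * Real.exp (-‖x - a‖)) := fun x => by
    refine hL1.abs.mono'
      (hfm.aestronglyMeasurable.mul (cexp x).aestronglyMeasurable)
      (Filter.Eventually.of_forall fun a => ?_)
    rw [norm_mul, Real.norm_eq_abs, Real.norm_eq_abs,
      abs_of_nonneg (Real.exp_pos _).le]
    have h2 : Real.exp (-‖x - a‖) ≤ 1 :=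
      Real.exp_le_one_iff.2 (neg_nonpos.2 (norm_nonneg _))
    have h4 : (0:ℝ) ≤ |‖Ψ a‖ ^ 2 - 1| := abs_nonneg _
    nlinarith [(Real.exp_pos (-‖x - a‖)).le]
  have hNc : ∀ x : E3, Ncond Ψ x = (1 / (8 * Real.pi)) *
      ((∫ a : E3, (‖Ψ a‖ ^ 2 - 1) * Real.exp (-‖x - a‖)) +
        ∫ a : E3, Real.exp (-‖a‖)) := by
    intro x
    unfold Ncond
    congr 1
    rw [← integral_sub_left_eq_self (fun a : E3 => Real.exp (-‖a‖)) volume x]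
    rw [← integral_add (hint_F x) (hint_e x)]
    congr 1; funext a; ring
  set F' : E3 → (E3 →L[ℝ] ℝ) := fun a =>
    (‖Ψ a‖ ^ 2 - 1) • (Real.exp (-‖x₀ - a‖) •
      (-(‖x₀ - a‖⁻¹ • innerSL ℝ (x₀ - a)))) with hF'
  have hae : ∀ᵐ a : E3, a ≠ x₀ := by
    have h0 : volume ({x₀} : Set E3) = 0 := measure_singleton x₀
    rw [ae_iff]
    convert h0 using 2
    ext a; simp
  obtain ⟨hF'int, hderiv⟩ := hasFDerivAt_integral_of_dominated_loc_of_lip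
    (F := fun x a => (‖Ψ a‖ ^ 2 - 1) * Real.exp (-‖x - a‖)) (F' := F')
    (bound := fun a => |‖Ψ a‖ ^ 2 - 1|) (x₀ := x₀) (s := Metric.ball x₀ 1) (Metric.ball_mem_nhds x₀ one_pos)
    (Filter.Eventually.of_forall fun x =>
      hfm.aestronglyMeasurable.mul (cexp x).aestronglyMeasurable)
    (hint_F x₀)
    (by
      apply AEStronglyMeasurable.smul hfm.aestronglyMeasurable
      apply AEStronglyMeasurable.smul (cexp x₀).aestronglyMeasurable
      apply AEStronglyMeasurable.neg
      exact AEStronglyMeasurable.smul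
        ((measurable_const.sub measurable_id).norm.inv).aestronglyMeasurable
        ((innerSL ℝ).continuous.comp
          (continuous_const.sub continuous_id)).aestronglyMeasurable)
    (Filter.Eventually.of_forall fun a => by
      have hlip : LipschitzWith (Real.nnabs |‖Ψ a‖ ^ 2 - 1|)
          (fun x : E3 => (‖Ψ a‖ ^ 2 - 1) * Real.exp (-‖x - a‖)) := by
        refine LipschitzWith.of_dist_le_mul fun x y => ?_
        have hl := (lip_exp_norm a).dist_le_mul x y
        rw [Real.dist_eq, NNReal.coe_one, one_mul] at hl
        rw [Real.dist_eq, Real.coe_nnabs, abs_abs]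
        calc |(‖Ψ a‖ ^ 2 - 1) * Real.exp (-‖x - a‖) -
              (‖Ψ a‖ ^ 2 - 1) * Real.exp (-‖y - a‖)|
            = |‖Ψ a‖ ^ 2 - 1| * |Real.exp (-‖x - a‖) - Real.exp (-‖y - a‖)| := by
              rw [← mul_sub, abs_mul]
          _ ≤ |‖Ψ a‖ ^ 2 - 1| * dist x y :=
              mul_le_mul_of_nonneg_left hl (abs_nonneg _)
      exact hlip.lipschitzOnWith)
    hL1.abs
    (hae.mono fun a ha =>
      (hasFDerivAt_exp_neg_norm_sub a x₀ (Ne.symm ha)).const_mul (‖Ψ a‖ ^ 2 - 1))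
  have hNderiv : HasFDerivAt (Ncond Ψ)
      ((1 / (8 * Real.pi)) • ∫ a : E3, F' a) x₀ := by
    have h1 := (hderiv.add_const (∫ a : E3, Real.exp (-‖a‖))).const_mul
      (1 / (8 * Real.pi))
    have h2 : Ncond Ψ = fun x => (1 / (8 * Real.pi)) *
        ((∫ a : E3, (‖Ψ a‖ ^ 2 - 1) * Real.exp (-‖x - a‖)) +
          ∫ a : E3, Real.exp (-‖a‖)) := funext hNc
    rw [h2]; exact h1
  have hvec := vec_integrable Ψ hmeas hL1 x₀
  have hpt : ∀ a : E3, F' a = -((innerSL ℝ)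
      (((‖Ψ a‖ ^ 2 - 1) * Real.exp (-‖x₀ - a‖)) • (‖x₀ - a‖⁻¹ • (x₀ - a)))) := by
    intro a; ext y
    simp only [hF', ContinuousLinearMap.smul_apply, ContinuousLinearMap.neg_apply,
      innerSL_apply_apply, smul_eq_mul, real_inner_smul_left]
    ring
  have hLmap : (∫ a : E3, F' a) = -((innerSL ℝ)
      (∫ a : E3, ((‖Ψ a‖ ^ 2 - 1) * Real.exp (-‖x₀ - a‖)) •
        (‖x₀ - a‖⁻¹ • (x₀ - a)))) := by
    rw [← ContinuousLinearMap.integral_comp_comm (innerSL ℝ) hvec, ← integral_neg]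
    congr 1
    funext a
    exact hpt a
  rw [hasGradientAt_iff_hasFDerivAt]
  have hfinal : (InnerProductSpace.toDual ℝ E3)
      (-((1 / (8 * Real.pi)) •
        ∫ r' : E3, ((‖Ψ r'‖ ^ 2 - 1) * Real.exp (-‖x₀ - r'‖)) •
          (‖x₀ - r'‖⁻¹ • (x₀ - r'))))
      = (1 / (8 * Real.pi)) • ∫ a : E3, F' a := by
    rw [hLmap, map_neg, _root_.map_smul, smul_neg]
    congr 2
  rw [hfinal]
  exact hNderiv

/-- **Gradient of the averaged condensate density.**
If `|Ψ|² − 1 ∈ L¹(ℝ³)` then `N_c` is differentiable, its gradient is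
`∇N_c(r) = −C* ∫ ((r−r′)/|r−r′|)(|Ψ(r′)|²−1) e^{−|r−r′|} dr′`, and
`‖∇N_c‖_{L^∞} ≤ C* ‖|Ψ|²−1‖_{L¹}`. -/
theorem gradient_averaged_condensate_density
    (Ψ : E3 → ℂ) (hmeas : Measurable Ψ)
    (hL1 : Integrable (fun r' : E3 => ‖Ψ r'‖ ^ 2 - 1)) :
    Differentiable ℝ (Ncond Ψ) ∧
    (∀ r : E3, gradient (Ncond Ψ) r
      = -((1 / (8 * Real.pi)) •
          ∫ r' : E3, ((‖Ψ r'‖ ^ 2 - 1) * Real.exp (-‖r - r'‖)) •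
            (‖r - r'‖⁻¹ • (r - r')))) ∧
    ∀ r : E3, ‖gradient (Ncond Ψ) r‖
      ≤ (1 / (8 * Real.pi)) * ∫ r' : E3, |‖Ψ r'‖ ^ 2 - 1| := by
  have key := key_hasGradientAt Ψ hmeas hL1
  refine ⟨fun r => (key r).differentiableAt, fun r => (key r).gradient, fun r => ?_⟩
  rw [(key r).gradient]
  have hC : (0:ℝ) ≤ 1 / (8 * Real.pi) := by positivity
  rw [norm_neg, norm_smul, Real.norm_eq_abs, abs_of_nonneg hC]
  refine mul_le_mul_of_nonneg_left ?_ hC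
  calc ‖∫ r' : E3, ((‖Ψ r'‖ ^ 2 - 1) * Real.exp (-‖r - r'‖)) • (‖r - r'‖⁻¹ • (r - r'))‖
      ≤ ∫ r' : E3, ‖((‖Ψ r'‖ ^ 2 - 1) * Real.exp (-‖r - r'‖)) • (‖r - r'‖⁻¹ • (r - r'))‖ :=
        norm_integral_le_integral_norm _
    _ ≤ ∫ r' : E3, |‖Ψ r'‖ ^ 2 - 1| :=
        integral_mono (vec_integrable Ψ hmeas hL1 r).norm hL1.abs
          (fun r' => vec_norm_le Ψ r r')
end
end
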